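/- Let (B, ρ, P) be smooth maps on [0,T] × ℝ^d, ℤ^d-periodic in space, with ρ > 0, solving the Eulerian heat equation: ∂_t B + ∇·( (B⊗P − P⊗B)/ρ ) = 0, ∇·B = 0, ∂_t ρ + ∇·P = 0, P = ∇·( B⊗B/ρ ). Then the rescaled fields b = B/ρ and v = P/ρ satisfy the non-conservative system ∂_t b + (v·∇)b = (b·∇)v and v = (b·∇)b pointwise on [0,T] × ℝ^d. -/

import Mathlib

open MeasureTheory

noncomputable section

/-- Spatial partial derivative `∂_j f` of a scalar function on `ℝ^d`. -/
def pd {d : ℕ} (j : Fin d) (f : (Fin d → ℝ) → ℝ) (x : Fin d → ℝ) : ℝ :=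
  fderiv ℝ f x (Pi.single j 1)

lemma pd_sub {d : ℕ} {j : Fin d} {f g : (Fin d → ℝ) → ℝ} {x : Fin d → ℝ}
    (hf : DifferentiableAt ℝ f x) (hg : DifferentiableAt ℝ g x) :
    pd j (fun y => f y - g y) x = pd j f x - pd j g x := by
  unfold pd; rw [fderiv_fun_sub hf hg]; rfl

lemma pd_mul {d : ℕ} {j : Fin d} {f g : (Fin d → ℝ) → ℝ} {x : Fin d → ℝ}
    (hf : DifferentiableAt ℝ f x) (hg : DifferentiableAt ℝ g x) :
    pd j (fun y => f y * g y) x = pd j f x * g x + f x * pd j g x := by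
  unfold pd
  rw [fderiv_fun_mul hf hg]
  simp [ContinuousLinearMap.add_apply, ContinuousLinearMap.smul_apply, smul_eq_mul]
  ring

lemma pd_inv {d : ℕ} {j : Fin d} {g : (Fin d → ℝ) → ℝ} {x : Fin d → ℝ}
    (hg : DifferentiableAt ℝ g x) (h0 : g x ≠ 0) :
    pd j (fun y => (g y)⁻¹) x = -pd j g x / (g x) ^ 2 := by
  unfold pd
  have : (fun y => (g y)⁻¹) = (fun z : ℝ => z⁻¹) ∘ g := rfl
  rw [this, fderiv_comp x (differentiableAt_inv h0) hg, fderiv_inv]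
  simp [ContinuousLinearMap.comp_apply, ContinuousLinearMap.smulRight_apply, smul_eq_mul]
  ring

lemma pd_div {d : ℕ} {j : Fin d} {f g : (Fin d → ℝ) → ℝ} {x : Fin d → ℝ}
    (hf : DifferentiableAt ℝ f x) (hg : DifferentiableAt ℝ g x) (h0 : g x ≠ 0) :
    pd j (fun y => f y / g y) x = (pd j f x * g x - f x * pd j g x) / (g x) ^ 2 := by
  have h1 : (fun y => f y / g y) = fun y => f y * (g y)⁻¹ := by
    funext y; rw [div_eq_mul_inv]
  have hginv : DifferentiableAt ℝ (fun y => (g y)⁻¹) x :=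
    (differentiableAt_inv h0).comp x hg
  rw [h1, pd_mul hf hginv, pd_inv hg h0]
  field_simp
  ring

/-- For smooth periodic solutions `(B,ρ,P)` of the Eulerian heat
equation with `ρ > 0`, the rescaled fields `b = B/ρ`, `v = P/ρ` solve the
non-conservative system `∂_t b + (v·∇)b = (b·∇)v`, `v = (b·∇)b`. -/
theorem stmt_8 (d : ℕ) (T : ℝ) (hT : 0 < T)
    (B P : ℝ → (Fin d → ℝ) → Fin d → ℝ) (ρ : ℝ → (Fin d → ℝ) → ℝ)
    (hB : ContDiff ℝ (⊤ : ℕ∞) (fun p : ℝ × (Fin d → ℝ) => B p.1 p.2))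
    (hρ : ContDiff ℝ (⊤ : ℕ∞) (fun p : ℝ × (Fin d → ℝ) => ρ p.1 p.2))
    (hP : ContDiff ℝ (⊤ : ℕ∞) (fun p : ℝ × (Fin d → ℝ) => P p.1 p.2))
    (hρpos : ∀ t x, 0 < ρ t x)
    (hBper : ∀ (t : ℝ) (x : Fin d → ℝ) (k : Fin d → ℤ), B t (x + fun i => (k i : ℝ)) = B t x)
    (hρper : ∀ (t : ℝ) (x : Fin d → ℝ) (k : Fin d → ℤ), ρ t (x + fun i => (k i : ℝ)) = ρ t x)
    (hPper : ∀ (t : ℝ) (x : Fin d → ℝ) (k : Fin d → ℤ), P t (x + fun i => (k i : ℝ)) = P t x)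
    (hind : ∀ t ∈ Set.Icc (0:ℝ) T, ∀ x, ∀ i, deriv (fun τ => B τ x i) t
      + ∑ j, pd j (fun y => (B t y i * P t y j - P t y i * B t y j) / ρ t y) x = 0)
    (hdivB : ∀ t ∈ Set.Icc (0:ℝ) T, ∀ x, ∑ j, pd j (fun y => B t y j) x = 0)
    (hcont : ∀ t ∈ Set.Icc (0:ℝ) T, ∀ x,
      deriv (fun τ => ρ τ x) t + ∑ j, pd j (fun y => P t y j) x = 0)
    (hPdef : ∀ t ∈ Set.Icc (0:ℝ) T, ∀ x, ∀ i,
      P t x i = ∑ j, pd j (fun y => B t y i * B t y j / ρ t y) x) :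
    ∀ t ∈ Set.Icc (0:ℝ) T, ∀ x, ∀ i,
      (deriv (fun τ => B τ x i / ρ τ x) t
          + ∑ j, (P t x j / ρ t x) * pd j (fun y => B t y i / ρ t y) x
        = ∑ j, (B t x j / ρ t x) * pd j (fun y => P t y i / ρ t y) x)
      ∧ P t x i / ρ t x = ∑ j, (B t x j / ρ t x) * pd j (fun y => B t y i / ρ t y) x := by
  intro t ht x i
  -- differentiability of spatial slices
  have hBsl : ∀ (i' : Fin d), DifferentiableAt ℝ (fun y => B t y i') x := by
    intro i'
    have h1 : ContDiff ℝ (⊤ : ℕ∞) (fun p : ℝ × (Fin d → ℝ) => B p.1 p.2 i') :=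
      contDiff_pi.mp hB i'
    have h2 : ContDiff ℝ (⊤ : ℕ∞) (fun y : Fin d → ℝ => B t y i') :=
      h1.comp ((contDiff_const (c := t)).prodMk contDiff_id)
    exact (h2.differentiable (by simp)).differentiableAt
  have hPsl : ∀ (i' : Fin d), DifferentiableAt ℝ (fun y => P t y i') x := by
    intro i'
    have h1 : ContDiff ℝ (⊤ : ℕ∞) (fun p : ℝ × (Fin d → ℝ) => P p.1 p.2 i') :=
      contDiff_pi.mp hP i'
    have h2 : ContDiff ℝ (⊤ : ℕ∞) (fun y : Fin d → ℝ => P t y i') :=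
      h1.comp ((contDiff_const (c := t)).prodMk contDiff_id)
    exact (h2.differentiable (by simp)).differentiableAt
  have hρsl : DifferentiableAt ℝ (fun y => ρ t y) x := by
    have h2 : ContDiff ℝ (⊤ : ℕ∞) (fun y : Fin d → ℝ => ρ t y) :=
      hρ.comp ((contDiff_const (c := t)).prodMk contDiff_id)
    exact (h2.differentiable (by simp)).differentiableAt
  -- differentiability of time slices
  have hBtm : DifferentiableAt ℝ (fun τ => B τ x i) t := by
    have h1 : ContDiff ℝ (⊤ : ℕ∞) (fun p : ℝ × (Fin d → ℝ) => B p.1 p.2 i) :=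
      contDiff_pi.mp hB i
    have h2 : ContDiff ℝ (⊤ : ℕ∞) (fun τ : ℝ => B τ x i) :=
      h1.comp (contDiff_id.prodMk (contDiff_const (c := x)))
    exact (h2.differentiable (by simp)).differentiableAt
  have hρtm : DifferentiableAt ℝ (fun τ => ρ τ x) t := by
    have h2 : ContDiff ℝ (⊤ : ℕ∞) (fun τ : ℝ => ρ τ x) :=
      hρ.comp (contDiff_id.prodMk (contDiff_const (c := x)))
    exact (h2.differentiable (by simp)).differentiableAt
  have rne : ρ t x ≠ 0 := (hρpos t x).ne'
  have r2ne : (ρ t x) ^ 2 ≠ 0 := pow_ne_zero 2 rne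
  -- Goal 2 first
  have h4 : P t x i = ∑ j, (((pd j (fun y => B t y i) x * B t x j
        + B t x i * pd j (fun y => B t y j) x) * ρ t x
        - B t x i * B t x j * pd j (fun y => ρ t y) x) / (ρ t x) ^ 2) := by
    rw [hPdef t ht x i]
    refine Finset.sum_congr rfl fun j _ => ?_
    rw [pd_div (f := fun y => B t y i * B t y j) ((hBsl i).mul (hBsl j)) hρsl rne, pd_mul (hBsl i) (hBsl j)]
  have goal2 : P t x i / ρ t x
      = ∑ j, (B t x j / ρ t x) * pd j (fun y => B t y i / ρ t y) x := by
    symm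
    have step : ∀ j : Fin d, (B t x j / ρ t x) * pd j (fun y => B t y i / ρ t y) x
        = ((((pd j (fun y => B t y i) x * B t x j
            + B t x i * pd j (fun y => B t y j) x) * ρ t x
            - B t x i * B t x j * pd j (fun y => ρ t y) x) / (ρ t x) ^ 2) / ρ t x)
          - (B t x i / (ρ t x) ^ 2) * pd j (fun y => B t y j) x := by
      intro j
      rw [pd_div (hBsl i) hρsl rne]
      field_simp
      ring
    calc ∑ j, (B t x j / ρ t x) * pd j (fun y => B t y i / ρ t y) x
        = (∑ j, (((pd j (fun y => B t y i) x * B t x j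
            + B t x i * pd j (fun y => B t y j) x) * ρ t x
            - B t x i * B t x j * pd j (fun y => ρ t y) x) / (ρ t x) ^ 2)) / ρ t x
          - (B t x i / (ρ t x) ^ 2) * ∑ j, pd j (fun y => B t y j) x := by
          rw [Finset.sum_congr rfl fun j _ => step j, Finset.sum_sub_distrib,
            ← Finset.sum_div, ← Finset.mul_sum]
      _ = P t x i / ρ t x := by rw [← h4, hdivB t ht x, mul_zero, sub_zero]
  refine ⟨?_, goal2⟩
  -- Goal 1
  have h1 : deriv (fun τ => B τ x i) t
      + ∑ j, (((pd j (fun y => B t y i) x * P t x j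
          + B t x i * pd j (fun y => P t y j) x
          - (pd j (fun y => P t y i) x * B t x j
          + P t x i * pd j (fun y => B t y j) x)) * ρ t x
          - (B t x i * P t x j - P t x i * B t x j) * pd j (fun y => ρ t y) x)
          / (ρ t x) ^ 2) = 0 := by
    rw [← hind t ht x i]
    congr 1
    refine Finset.sum_congr rfl fun j _ => ?_
    rw [pd_div (f := fun y => B t y i * P t y j - P t y i * B t y j)
        (((hBsl i).mul (hPsl j)).sub ((hPsl i).mul (hBsl j))) hρsl rne,
      pd_sub (f := fun y => B t y i * P t y j) (g := fun y => P t y i * B t y j)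
        ((hBsl i).mul (hPsl j)) ((hPsl i).mul (hBsl j)),
      pd_mul (hBsl i) (hPsl j), pd_mul (hPsl i) (hBsl j)]
  have h3 := hcont t ht x
  have hderiv : deriv (fun τ => B τ x i / ρ τ x) t
      = (deriv (fun τ => B τ x i) t * ρ t x
        - B t x i * deriv (fun τ => ρ τ x) t) / (ρ t x) ^ 2 :=
    deriv_div hBtm hρtm rne
  -- per-term identity
  have step1 : ∀ j : Fin d,
      (B t x j / ρ t x) * pd j (fun y => P t y i / ρ t y) x
        - (P t x j / ρ t x) * pd j (fun y => B t y i / ρ t y) x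
      = -(1 / ρ t x) * (((pd j (fun y => B t y i) x * P t x j
          + B t x i * pd j (fun y => P t y j) x
          - (pd j (fun y => P t y i) x * B t x j
          + P t x i * pd j (fun y => B t y j) x)) * ρ t x
          - (B t x i * P t x j - P t x i * B t x j) * pd j (fun y => ρ t y) x)
          / (ρ t x) ^ 2)
        + (B t x i / (ρ t x) ^ 2) * pd j (fun y => P t y j) x
        - (P t x i / (ρ t x) ^ 2) * pd j (fun y => B t y j) x := by
    intro j
    rw [pd_div (hPsl i) hρsl rne, pd_div (hBsl i) hρsl rne]
    field_simp
    ring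
  have sum1 : ∑ j, (B t x j / ρ t x) * pd j (fun y => P t y i / ρ t y) x
        - ∑ j, (P t x j / ρ t x) * pd j (fun y => B t y i / ρ t y) x
      = -(1 / ρ t x) * (∑ j, (((pd j (fun y => B t y i) x * P t x j
          + B t x i * pd j (fun y => P t y j) x
          - (pd j (fun y => P t y i) x * B t x j
          + P t x i * pd j (fun y => B t y j) x)) * ρ t x
          - (B t x i * P t x j - P t x i * B t x j) * pd j (fun y => ρ t y) x)
          / (ρ t x) ^ 2))
        + (B t x i / (ρ t x) ^ 2) * ∑ j, pd j (fun y => P t y j) x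
        - (P t x i / (ρ t x) ^ 2) * ∑ j, pd j (fun y => B t y j) x := by
    rw [← Finset.sum_sub_distrib, Finset.sum_congr rfl fun j _ => step1 j]
    rw [Finset.sum_sub_distrib, Finset.sum_add_distrib, Finset.mul_sum, Finset.mul_sum,
      Finset.mul_sum]
  rw [hdivB t ht x, mul_zero, sub_zero] at sum1
  have hBt : deriv (fun τ => B τ x i) t
      = -∑ j, (((pd j (fun y => B t y i) x * P t x j
          + B t x i * pd j (fun y => P t y j) x
          - (pd j (fun y => P t y i) x * B t x j
          + P t x i * pd j (fun y => B t y j) x)) * ρ t x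
          - (B t x i * P t x j - P t x i * B t x j) * pd j (fun y => ρ t y) x)
          / (ρ t x) ^ 2) := by linarith [h1]
  have hRt : deriv (fun τ => ρ τ x) t = -∑ j, pd j (fun y => P t y j) x := by
    linarith [h3]
  have key : deriv (fun τ => B τ x i / ρ τ x) t
      = ∑ j, (B t x j / ρ t x) * pd j (fun y => P t y i / ρ t y) x
        - ∑ j, (P t x j / ρ t x) * pd j (fun y => B t y i / ρ t y) x := by
    rw [hderiv, hBt, hRt, sum1]
    generalize (∑ j, (((pd j (fun y => B t y i) x * P t x j
          + B t x i * pd j (fun y => P t y j) x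
          - (pd j (fun y => P t y i) x * B t x j
          + P t x i * pd j (fun y => B t y j) x)) * ρ t x
          - (B t x i * P t x j - P t x i * B t x j) * pd j (fun y => ρ t y) x)
          / (ρ t x) ^ 2)) = S1
    generalize (∑ j, pd j (fun y => P t y j) x) = S2
    field_simp
    ring
  linarith [key]
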